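/- Let Y ∼ Hypergeometric(n, d, s) be the number of non-trivial elements in a chunk of size s, and let f(x) = x·e^{εx} with ε > 0. Then E[f(Y)] ≤ e^ε·(d/n)·s·(1 + (e^ε − 1)·(d/n))^{s−1}. -/

import Mathlib

open Finset

lemma aux_choose_mul (a k s : ℕ) (hsk : s ≤ k) :
    a.choose k * k.choose s = a.choose s * (a - s).choose (k - s) := by
  rcases le_or_gt k a with h | h
  · exact Nat.choose_mul hsk
  · rw [Nat.choose_eq_zero_of_lt h, Nat.zero_mul]
    rcases le_or_gt s a with h2 | h2
    · rw [Nat.choose_eq_zero_of_lt (show a - s < k - s by omega), Nat.mul_zero]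
    · rw [Nat.choose_eq_zero_of_lt h2, Nat.zero_mul]

lemma aux_desc (n d i : ℕ) (hdn : d ≤ n) :
    (d-1).descFactorial i * n^i ≤ (n-1).descFactorial i * d^i := by
  induction i with
  | zero => simp
  | succ i ih =>
    rw [Nat.descFactorial_succ, Nat.descFactorial_succ, pow_succ, pow_succ]
    have h1 : (d - 1 - i) * n ≤ (n - 1 - i) * d := by
      rcases le_or_gt d (i+1) with h | h
      · have : d - 1 - i = 0 := by omega
        simp [this]
      · have e1 : d - 1 - i = d - (1+i) := by omega
        have e2 : n - 1 - i = n - (1+i) := by omega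
        rw [e1, e2, Nat.sub_mul, Nat.sub_mul]
        have h3 : (1+i) * d ≤ (1+i) * n := Nat.mul_le_mul_left _ hdn
        have h4 : d * n = n * d := Nat.mul_comm d n
        omega
    calc (d - 1 - i) * (d-1).descFactorial i * (n ^ i * n)
        = ((d-1-i) * n) * ((d-1).descFactorial i * n^i) := by ring
      _ ≤ ((n-1-i) * d) * ((n-1).descFactorial i * d^i) := Nat.mul_le_mul h1 ih
      _ = (n - 1 - i) * (n-1).descFactorial i * (d ^ i * d) := by ring

lemma aux_choose_pow (n d i : ℕ) (hdn : d ≤ n) :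
    (d-1).choose i * n^i ≤ (n-1).choose i * d^i := by
  have h := aux_desc n d i hdn
  rw [Nat.descFactorial_eq_factorial_mul_choose, Nat.descFactorial_eq_factorial_mul_choose,
    Nat.mul_assoc, Nat.mul_assoc] at h
  exact Nat.le_of_mul_le_mul_left h (Nat.factorial_pos i)

lemma aux_vandermonde (a b m : ℕ) :
    ∑ t ∈ range (m+1), a.choose t * b.choose (m - t) = (a+b).choose m := by
  rw [Nat.add_choose_eq, Finset.Nat.sum_antidiagonal_eq_sum_range_succ_mk]

lemma key_sum (a b s i : ℕ) (his : i < s) :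
    ∑ j ∈ range s, a.choose j * b.choose (s-1-j) * j.choose i
      = a.choose i * (a - i + b).choose (s-1-i) := by
  have step1 : ∑ j ∈ Ico i s, a.choose j * b.choose (s-1-j) * j.choose i
      = ∑ j ∈ range s, a.choose j * b.choose (s-1-j) * j.choose i := by
    apply Finset.sum_subset
    · intro x hx
      simp only [Finset.mem_Ico] at hx
      exact Finset.mem_range.mpr hx.2
    · intro x hx hx2
      simp only [Finset.mem_range] at hx
      simp only [Finset.mem_Ico, not_and, not_le] at hx2
      rw [Nat.choose_eq_zero_of_lt (show x < i by omega), Nat.mul_zero]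
  rw [← step1, Finset.sum_Ico_eq_sum_range]
  have step2 : ∀ t ∈ range (s - i),
      a.choose (i+t) * b.choose (s-1-(i+t)) * (i+t).choose i
        = a.choose i * ((a-i).choose t * b.choose ((s-1-i) - t)) := by
    intro t ht
    have e1 : s - 1 - (i+t) = (s-1-i) - t := by omega
    have e2 : a.choose (i+t) * (i+t).choose i = a.choose i * (a-i).choose t := by
      have := aux_choose_mul a (i+t) i (Nat.le_add_right i t)
      simpa using this
    calc a.choose (i+t) * b.choose (s-1-(i+t)) * (i+t).choose i
        = (a.choose (i+t) * (i+t).choose i) * b.choose ((s-1-i)-t) := by rw [e1]; ring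
      _ = a.choose i * ((a-i).choose t * b.choose ((s-1-i)-t)) := by rw [e2]; ring
  rw [Finset.sum_congr rfl step2, ← Finset.mul_sum]
  congr 1
  have : s - i = (s - 1 - i) + 1 := by omega
  rw [this, aux_vandermonde]

lemma term_le (n d s i : ℕ) (hdn : d ≤ n) (hsn : s ≤ n) (his : i < s) :
    (d-1).choose i * (n-1-i).choose (s-1-i) * n^i
      ≤ (s-1).choose i * ((n-1).choose (s-1)) * d^i := by
  have e : (s-1).choose i * (n-1).choose (s-1) = (n-1).choose i * (n-1-i).choose (s-1-i) := by
    rw [Nat.mul_comm]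
    exact aux_choose_mul (n-1) (s-1) i (by omega)
  rw [e]
  calc (d-1).choose i * (n-1-i).choose (s-1-i) * n^i
      = ((d-1).choose i * n^i) * (n-1-i).choose (s-1-i) := by ring
    _ ≤ ((n-1).choose i * d^i) * (n-1-i).choose (s-1-i) :=
        Nat.mul_le_mul_right _ (aux_choose_pow n d i hdn)
    _ = (n-1).choose i * (n-1-i).choose (s-1-i) * d^i := by ring

lemma aux_mul_choose (d j : ℕ) : (j+1) * d.choose (j+1) = d * (d-1).choose j := by
  cases d with
  | zero => simp
  | succ e =>
    have := Nat.add_one_mul_choose_eq e j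
    simpa [Nat.succ_sub_one, Nat.mul_comm] using this.symm

/-- for `Y ∼ Hypergeometric(n, d, s)` and `f(x) = x·e^{εx}`,
`E[f(Y)] ≤ e^ε·(d/n)·s·(1 + (e^ε − 1)·(d/n))^{s−1}`. -/
theorem hypergeometric_x_exp_expectation_le (n d s : ℕ) (hn : 0 < n)
    (hdn : d ≤ n) (hsn : s ≤ n) (ε : ℝ) (hε : 0 < ε) :
    ∑ k ∈ range (s + 1),
        (((d.choose k : ℝ) * ((n - d).choose (s - k) : ℝ)) / (n.choose s : ℝ))
          * ((k : ℝ) * Real.exp (ε * k))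
      ≤ Real.exp ε * ((d : ℝ) / n) * s
          * (1 + (Real.exp ε - 1) * ((d : ℝ) / n)) ^ (s - 1) := by
  have hE : (1:ℝ) < Real.exp ε := by
    have h := Real.exp_lt_exp.mpr hε
    simpa using h
  set E := Real.exp ε with hEdef
  have hc : (0:ℝ) ≤ E - 1 := by linarith
  have hexp : ∀ k : ℕ, Real.exp (ε * k) = E ^ k := fun k => by
    rw [mul_comm, Real.exp_nat_mul]
  -- dispatch d = 0
  rcases Nat.eq_zero_or_pos d with hd0 | hd
  · subst hd0
    rw [Finset.sum_eq_zero (fun k _ => by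
      cases k with
      | zero => simp
      | succ t => simp [Nat.choose_zero_succ])]
    simp
  -- dispatch s = 0
  rcases Nat.eq_zero_or_pos s with hs0 | hs
  · subst hs0; simp
  obtain ⟨m, rfl⟩ : ∃ m, s = m + 1 := ⟨s - 1, by omega⟩
  simp only [Nat.add_sub_cancel]
  have hnR : (0:ℝ) < (n:ℝ) := by exact_mod_cast hn
  have hCpos : (0:ℝ) < (n.choose (m+1) : ℝ) := by
    exact_mod_cast Nat.choose_pos hsn
  set q : ℝ := (d:ℝ)/n with hq
  -- LHS = S / C
  have hLHS : ∑ k ∈ range (m + 1 + 1),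
        (((d.choose k : ℝ) * ((n - d).choose (m + 1 - k) : ℝ)) / (n.choose (m+1) : ℝ))
          * ((k : ℝ) * Real.exp (ε * k))
      = (∑ k ∈ range (m + 2),
          (d.choose k : ℝ) * ((n - d).choose (m + 1 - k) : ℝ) * k * E ^ k)
        / (n.choose (m+1) : ℝ) := by
    rw [Finset.sum_div]
    apply Finset.sum_congr rfl
    intro k hk
    rw [hexp k]
    ring
  rw [hLHS, div_le_iff₀ hCpos]
  -- S = d * E * inner sum
  have hS : (∑ k ∈ range (m + 2),
          (d.choose k : ℝ) * ((n - d).choose (m + 1 - k) : ℝ) * k * E ^ k)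
      = (d:ℝ) * E * ∑ i ∈ range (m+1),
          (E-1)^i * (((d-1).choose i * (n-1-i).choose (m-i) : ℕ) : ℝ) := by
    rw [Finset.sum_range_succ']
    simp only [Nat.cast_zero, mul_zero, zero_mul, pow_zero, mul_one, add_zero,
      Nat.succ_sub_succ_eq_sub]
    have step1 : ∀ j ∈ range (m+1),
        (d.choose (j+1) : ℝ) * ((n - d).choose (m - j) : ℝ) * (j+1 : ℕ) * E ^ (j+1)
          = (d:ℝ) * E * (((d-1).choose j : ℝ) * ((n-d).choose (m-j) : ℝ) * E ^ j) := by
      intro j hj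
      have h := aux_mul_choose d j
      have hcast : ((j:ℝ)+1) * (d.choose (j+1) : ℝ) = (d:ℝ) * ((d-1).choose j : ℝ) := by
        exact_mod_cast h
      push_cast
      rw [pow_succ]
      linear_combination (((n-d).choose (m-j) : ℝ)) * E ^ j * E * hcast
    rw [Finset.sum_congr rfl step1, ← Finset.mul_sum]
    congr 1
    -- expand E^j and swap
    have step2 : ∀ j ∈ range (m+1),
        ((d-1).choose j : ℝ) * ((n-d).choose (m-j) : ℝ) * E ^ j
          = ∑ i ∈ range (m+1),
              (E-1)^i * (((d-1).choose j : ℝ) * ((n-d).choose (m-j) : ℝ) * (j.choose i : ℝ)) := by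
      intro j hj
      simp only [Finset.mem_range] at hj
      have hpow : E ^ j = ∑ i ∈ range (j+1), (E-1)^i * (j.choose i : ℝ) := by
        have h := add_pow (E-1) 1 j
        simpa using h
      have hext : ∑ i ∈ range (j+1), (E-1)^i * (j.choose i : ℝ)
          = ∑ i ∈ range (m+1), (E-1)^i * (j.choose i : ℝ) := by
        apply Finset.sum_subset
        · intro x hx
          simp only [Finset.mem_range] at hx ⊢
          omega
        · intro x hx hx2
          simp only [Finset.mem_range] at hx hx2
          rw [Nat.choose_eq_zero_of_lt (by omega), Nat.cast_zero, mul_zero]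
      rw [hpow, hext, Finset.mul_sum]
      apply Finset.sum_congr rfl
      intro i hi
      ring
    rw [Finset.sum_congr rfl step2, Finset.sum_comm]
    apply Finset.sum_congr rfl
    intro i hi
    simp only [Finset.mem_range] at hi
    rw [← Finset.mul_sum]
    congr 1
    have hkey := key_sum (d-1) (n-d) (m+1) i (by omega)
    simp only [Nat.add_sub_cancel] at hkey
    have hfix : (d-1).choose i * ((d-1) - i + (n-d)).choose (m-i)
        = (d-1).choose i * (n-1-i).choose (m-i) := by
      rcases le_or_gt d i with h | h
      · rw [Nat.choose_eq_zero_of_lt (by omega : d - 1 < i), Nat.zero_mul, Nat.zero_mul]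
      · congr 2
        omega
    rw [← hfix, ← hkey]
    push_cast
    apply Finset.sum_congr rfl
    intro j hj
    ring
  rw [hS]
  have hsum : ∑ i ∈ range (m+1), (E-1)^i * (((d-1).choose i * (n-1-i).choose (m-i) : ℕ):ℝ)
      ≤ ∑ i ∈ range (m+1), (E-1)^i * ((m.choose i :ℝ) * ((n-1).choose m : ℝ) * q^i) := by
    apply Finset.sum_le_sum
    intro i hi
    simp only [Finset.mem_range] at hi
    apply mul_le_mul_of_nonneg_left _ (pow_nonneg hc i)
    have hterm := term_le n d (m+1) i hdn hsn (by omega)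
    simp only [Nat.add_sub_cancel] at hterm
    have hpowpos : (0:ℝ) < (n:ℝ)^i := pow_pos hnR i
    rw [hq, div_pow, ← mul_div_assoc, le_div_iff₀ hpowpos]
    exact_mod_cast hterm
  have hqn : q * (n:ℝ) = (d:ℝ) := div_mul_cancel₀ _ (ne_of_gt hnR)
  have hnc : (((m+1:ℕ)):ℝ) * ((n.choose (m+1) : ℕ):ℝ)
      = (n:ℝ) * (((n-1).choose m : ℕ):ℝ) := by
    exact_mod_cast aux_mul_choose n m
  have hpow2 : ((E-1)*q + 1)^m = ∑ i ∈ range (m+1), ((E-1)*q)^i * ((m.choose i : ℕ):ℝ) := by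
    simpa using add_pow ((E-1)*q) 1 m
  have heq : (d:ℝ) * E * (∑ i ∈ range (m+1),
        (E-1)^i * ((m.choose i :ℝ) * ((n-1).choose m : ℝ) * q^i))
      = E * q * ((m+1 : ℕ):ℝ) * (1 + (E-1)*q)^m * ((n.choose (m+1) : ℕ):ℝ) := by
    rw [show (1:ℝ) + (E-1)*q = (E-1)*q + 1 from by ring, hpow2, Finset.mul_sum,
      Finset.mul_sum, Finset.sum_mul]
    apply Finset.sum_congr rfl
    intro i hi
    rw [mul_pow]
    linear_combination (-(E*(E-1)^i*q^i*((m.choose i : ℕ):ℝ)*(((n-1).choose m : ℕ):ℝ))) * hqn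
      + (-(E*(E-1)^i*q^i*((m.choose i : ℕ):ℝ)*q)) * hnc
  calc (d:ℝ) * E * ∑ i ∈ range (m+1),
        (E-1)^i * (((d-1).choose i * (n-1-i).choose (m-i) : ℕ):ℝ)
      ≤ (d:ℝ) * E * ∑ i ∈ range (m+1),
        (E-1)^i * ((m.choose i :ℝ) * ((n-1).choose m : ℝ) * q^i) :=
        mul_le_mul_of_nonneg_left hsum (by positivity)
    _ = E * q * ((m+1 : ℕ):ℝ) * (1 + (E-1)*q)^m * ((n.choose (m+1) : ℕ):ℝ) := heq
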